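/- Let R be a commutative ring, let t, v ∈ R with v² = 0, and let q ≥ 2 be an integer. Let f = t·X + v·X^q ∈ R[[X]], and for α ≥ 1 let f^{∘α} denote the α-fold composite of f with itself under substitution of power series (well defined since f has zero constant term). Then f^{∘α} − t^α·X − t^{α−1}·v·X^q lies in t^α·R[[X]]; that is, every coefficient of f^{∘α} − t^α·X − t^{α−1}·v·X^q is divisible by t^α. -/

import Mathlib

open PowerSeries

/-- Substitution of the power series `g` into `f`, i.e. the composite `f ∘ g`.
For `g` with zero constant term one has `coeff n (g ^ k) = 0` for `k > n`, so the
truncated sum below agrees with the usual substitution `Σ_k f_k · g^k`. -/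
noncomputable def psComp {R : Type*} [CommRing R] (f g : PowerSeries R) : PowerSeries R :=
  PowerSeries.mk fun n =>
    ∑ k ∈ Finset.range (n + 1), PowerSeries.coeff k f * PowerSeries.coeff n (g ^ k)

/-- The `α`-fold composite `f^{∘α}` of a power series with itself
(with `f^{∘0} = X` the identity). -/
noncomputable def psIter {R : Type*} [CommRing R] (f : PowerSeries R) : ℕ → PowerSeries R
  | 0 => PowerSeries.X
  | n + 1 => psComp f (psIter f n)

lemma coeff_pow_of_lt {R : Type*} [CommRing R] {g : PowerSeries R}
    (hg : constantCoeff g = 0) {n k : ℕ} (h : n < k) : coeff n (g ^ k) = 0 := by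
  obtain ⟨h', rfl⟩ := X_dvd_iff.2 hg
  rw [mul_pow, coeff_X_pow_mul']
  simp [Nat.not_le.2 h]

lemma psComp_linear {R : Type*} [CommRing R] (t v : R) {q : ℕ} (hq : 2 ≤ q)
    {g : PowerSeries R} (hg : constantCoeff g = 0) :
    psComp (C t * X + C v * X ^ q) g = C t * g + C v * g ^ q := by
  ext n
  simp only [psComp, coeff_mk, map_add, coeff_C_mul, coeff_X, coeff_X_pow,
    mul_ite, mul_one, mul_zero, ite_mul, zero_mul, add_mul, Finset.sum_add_distrib,
    Finset.sum_ite_eq' (Finset.range (n+1)), Finset.mem_range]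
  rcases Nat.eq_zero_or_pos n with rfl | hn
  · have h1 : coeff 0 g = 0 := by simpa using hg
    have h2 : coeff 0 (g ^ q) = 0 := coeff_pow_of_lt hg (by omega)
    simp [h1, h2]
  · rw [if_pos (by omega)]
    rcases lt_or_ge n q with h | h
    · rw [if_neg (by omega), pow_one, coeff_pow_of_lt hg h, mul_zero, add_zero]
    · rw [if_pos (by omega), pow_one]

lemma constantCoeff_psIter {R : Type*} [CommRing R] {f : PowerSeries R}
    (hf : constantCoeff f = 0) (m : ℕ) : constantCoeff (psIter f m) = 0 := by
  cases m with
  | zero => simp [psIter]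
  | succ m =>
    have : constantCoeff (psIter f (m+1)) = coeff 0 (psIter f (m+1)) := by simp
    rw [this]
    simp [psIter, psComp, coeff_mk, ← hf]

lemma key {R : Type*} [CommRing R] (t v : R) (hv : v ^ 2 = 0) {q : ℕ} (hq : 2 ≤ q) (m : ℕ) :
    ∃ r : PowerSeries R, psIter (C t * X + C v * X ^ q) (m + 1) =
      C (t ^ (m + 1)) * X + C (t ^ m * v) * X ^ q + C (t ^ (m + 1)) * r := by
  set f := C t * X + C v * X ^ q with hfdef
  have hf0 : constantCoeff f = 0 := by
    simp [hfdef, zero_pow (by omega : q ≠ 0)]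
  induction m with
  | zero =>
    refine ⟨0, ?_⟩
    show psComp f (psIter f 0) = _
    rw [show psIter f 0 = (X : PowerSeries R) from rfl,
      psComp_linear t v hq (by simp)]
    simp [hfdef]
  | succ m ih =>
    obtain ⟨r, hF⟩ := ih
    obtain ⟨s, rfl⟩ : ∃ s, q = s + 2 := ⟨q - 2, by omega⟩
    set F := psIter f (m + 1) with hFdef
    have hstep : psIter f (m + 2) = C t * F + C v * F ^ (s + 2) := by
      show psComp f F = _
      exact psComp_linear t v hq (constantCoeff_psIter hf0 (m+1))
    set G := C t * X + C v * X ^ (s+2) + C t * r with hG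
    have hFG : F = C (t ^ m) * G := by
      rw [hF, hG]
      simp only [map_mul, map_pow]
      ring
    set A := C t * (X + r) with hA
    obtain ⟨S, hS⟩ : (G - A) ∣ G ^ (s+2) - A ^ (s+2) := sub_dvd_pow_sub_pow G A (s+2)
    have hGA : G - A = C v * X ^ (s+2) := by rw [hG, hA]; ring
    have hvG : C v * G ^ (s+2) = C v * A ^ (s+2) := by
      have : C v * (G ^ (s+2) - A ^ (s+2)) = 0 := by
        rw [hS, hGA]
        have : C v * (C v * X ^ (s+2) * S) = C (v^2) * (X ^ (s+2) * S) := by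
          rw [map_pow]; ring
        rw [this, hv]; simp
      linear_combination this
    refine ⟨r + C (t ^ ((m+1)*s + m) * v) * (X + r) ^ (s+2), ?_⟩
    have h1 : C v * (C (t^m) * G)^(s+2) = (C (t^m))^(s+2) * (C v * G^(s+2)) := by
      rw [mul_pow]; ring
    have h2 : A ^ (s+2) = C (t^(s+2)) * (X + r)^(s+2) := by
      rw [hA, mul_pow, map_pow]
    rw [hstep, hFG, h1, hvG, h2, hG]
    simp only [map_mul, map_pow]
    ring

/-- Let `t v : R` with `v² = 0`, `q ≥ 2` and `f = t·X + v·X^q`. Then every coefficient of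
`f^{∘α} − t^α·X − t^{α-1}·v·X^q` is divisible by `t^α`. -/
theorem stmt5 (R : Type*) [CommRing R] (t v : R) (hv : v ^ 2 = 0)
    (q : ℕ) (hq : 2 ≤ q) (α : ℕ) (hα : 1 ≤ α) (n : ℕ) :
    t ^ α ∣ PowerSeries.coeff n
      (psIter (PowerSeries.C t * PowerSeries.X + PowerSeries.C v * PowerSeries.X ^ q) α -
        PowerSeries.C (t ^ α) * PowerSeries.X -
        PowerSeries.C (t ^ (α - 1) * v) * PowerSeries.X ^ q) := by
  obtain ⟨m, rfl⟩ : ∃ m, α = m + 1 := ⟨α - 1, by omega⟩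
  obtain ⟨r, hr⟩ := key t v hv hq m
  rw [hr]
  simp only [Nat.add_sub_cancel]
  have : C (t ^ (m + 1)) * X + C (t ^ m * v) * X ^ q + C (t ^ (m + 1)) * r -
      C (t ^ (m + 1)) * X - C (t ^ m * v) * X ^ q = C (t ^ (m + 1)) * r := by ring
  rw [this, coeff_C_mul]
  exact Dvd.intro _ rfl
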